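/- One has π⁻¹(ι_upp(M)) = {(α,p) ∈ N' : p ∈ ι_α(M)}. Moreover, if for every α ∈ A and every point p ∈ N_α \ ι_α(M) there exists a continuous curve γ : [0,1) → M with ι_α(γ(t)) → p as t → 1⁻, then for every point p ∈ N_upp \ ι_upp(M) there exists a continuous curve γ : [0,1) → M with ι_upp(γ(t)) → p as t → 1⁻. -/
import Mathlib


open Topology Filter

/-- The identification relation on the disjoint union `Σ α, N α`:
`(α,p) ∼ (β,q)` iff (`α ≤ β` and `ψ_{αβ}(p) = q`) or (`β ≤ α` and `ψ_{βα}(q) = p`). -/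
def simRel {A : Type*} [LinearOrder A] {N : A → Type*}
    (ψ : ∀ α β : A, α ≤ β → N α → N β) :
    (Σ α, N α) → (Σ α, N α) → Prop :=
  fun x y =>
    (∃ h : x.1 ≤ y.1, ψ x.1 y.1 h x.2 = y.2) ∨
    (∃ h : y.1 ≤ x.1, ψ y.1 x.1 h y.2 = x.2)

/-- `π⁻¹(ι_upp(M))` consists exactly of the points `(α,p)` with `p ∈ ι_α(M)`; and if every
boundary point of every `N_α` is a limit of `ι_α ∘ γ` for some continuous curve
`γ : [0,1) → M`, then the same holds for boundary points of `N_upp` and `ι_upp`. -/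
theorem preimage_iotaUpp_and_boundary_curves
    {M : Type*} [TopologicalSpace M]
    {A : Type*} [LinearOrder A] [Nonempty A]
    {N : A → Type*} [∀ α, TopologicalSpace (N α)]
    (ι : ∀ α, M → N α) (hι : ∀ α, IsOpenEmbedding (ι α))
    (ψ : ∀ α β : A, α ≤ β → N α → N β)
    (hψ : ∀ (α β : A) (h : α ≤ β), IsOpenEmbedding (ψ α β h))
    (hψι : ∀ (α β : A) (h : α ≤ β), (ψ α β h) ∘ (ι α) = ι β)
    (hψid : ∀ (α : A) (h : α ≤ α), ψ α α h = id)
    (hψcomp : ∀ (α β γ : A) (h₁ : α ≤ β) (h₂ : β ≤ γ),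
      (ψ β γ h₂) ∘ (ψ α β h₁) = ψ α γ (h₁.trans h₂))
    (α₀ : A) :
    ((Quot.mk (simRel ψ)) ⁻¹'
        (Set.range (fun m => Quot.mk (simRel ψ) ⟨α₀, ι α₀ m⟩)) =
      {x : Σ α, N α | x.2 ∈ Set.range (ι x.1)}) ∧
    ((∀ (α : A) (p : N α), p ∉ Set.range (ι α) →
        ∃ γ : ℝ → M, ContinuousOn γ (Set.Ico 0 1) ∧
          Tendsto (fun t => ι α (γ t)) (𝓝[<] (1:ℝ)) (𝓝 p)) →
      ∀ p : Quot (simRel ψ),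
        p ∉ Set.range (fun m => Quot.mk (simRel ψ) ⟨α₀, ι α₀ m⟩) →
          ∃ γ : ℝ → M, ContinuousOn γ (Set.Ico 0 1) ∧
            Tendsto (fun t => Quot.mk (simRel ψ) ⟨α₀, ι α₀ (γ t)⟩)
              (𝓝[<] (1:ℝ)) (𝓝 p)) := by

  have one : ∀ (α β : A) (h : α ≤ β) (p : N α) (q : N β), ψ α β h p = q →
      (p ∈ Set.range (ι α) ↔ q ∈ Set.range (ι β)) := by
    intro α β h p q hpq
    constructor
    · rintro ⟨m, rfl⟩
      exact ⟨m, by rw [← hpq, ← congrFun (hψι α β h) m]; rfl⟩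
    · rintro ⟨m, hm⟩
      refine ⟨m, (hψ α β h).injective ?_⟩
      rw [hpq, ← hm]
      exact congrFun (hψι α β h) m
  have key : ∀ x y : Σ α, N α, simRel ψ x y →
      (x.2 ∈ Set.range (ι x.1) ↔ y.2 ∈ Set.range (ι y.1)) := by
    rintro ⟨α, p⟩ ⟨β, q⟩ (⟨h, hpq⟩ | ⟨h, hqp⟩)
    · exact one α β h p q hpq
    · exact (one β α h q p hqp).symm
  have key2 : ∀ x y : Σ α, N α, Relation.EqvGen (simRel ψ) x y →
      (x.2 ∈ Set.range (ι x.1) ↔ y.2 ∈ Set.range (ι y.1)) := by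
    intro x y h
    induction h with
    | rel a b hab => exact key a b hab
    | refl a => exact Iff.rfl
    | symm a b _ ih => exact ih.symm
    | trans a b c _ _ ih1 ih2 => exact ih1.trans ih2
  have mkeq : ∀ (α : A) (m : M),
      Quot.mk (simRel ψ) ⟨α, ι α m⟩ = Quot.mk (simRel ψ) ⟨α₀, ι α₀ m⟩ := by
    intro α m
    apply Quot.sound
    rcases le_total α α₀ with h | h
    · exact Or.inl ⟨h, congrFun (hψι α α₀ h) m⟩
    · exact Or.inr ⟨h, congrFun (hψι α₀ α h) m⟩
  constructor
  · ext x
    simp only [Set.mem_preimage, Set.mem_range, Set.mem_setOf_eq]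
    constructor
    · rintro ⟨m, hm⟩
      have heq := Quot.eq.mp hm
      exact (key2 _ _ heq).mp ⟨m, rfl⟩
    · intro hx
      obtain ⟨β, p⟩ := x
      obtain ⟨m, hm⟩ := hx
      have hm' : ι β m = p := hm
      subst hm'
      exact ⟨m, (mkeq β m).symm⟩
  · intro hcurve p hp
    obtain ⟨⟨α, q⟩, rfl⟩ := Quot.exists_rep p
    have hq : q ∉ Set.range (ι α) := by
      rintro ⟨m, rfl⟩
      exact hp ⟨m, (mkeq α m).symm⟩
    obtain ⟨γ, hγc, hγt⟩ := hcurve α q hq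
    refine ⟨γ, hγc, ?_⟩
    have hcont : Continuous (fun y : N α => Quot.mk (simRel ψ) ⟨α, y⟩) :=
      continuous_quot_mk.comp continuous_sigmaMk
    have ht : Tendsto (fun t => Quot.mk (simRel ψ) ⟨α, ι α (γ t)⟩) (𝓝[<] (1:ℝ))
        (𝓝 (Quot.mk (simRel ψ) ⟨α, q⟩)) := (hcont.tendsto q).comp hγt
    have hfe : (fun t => Quot.mk (simRel ψ) (⟨α₀, ι α₀ (γ t)⟩ : Σ α, N α)) =
        fun t => Quot.mk (simRel ψ) ⟨α, ι α (γ t)⟩ :=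
      funext fun t => (mkeq α (γ t)).symm
    rw [hfe]
    exact ht
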